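/- Let T be an expandable tree (γ_T > 1). Then there exists a tree-shift 𝒯 ⊆ {0,1}^T which has positive entropy h(𝒯) > 0 but contains no independence set S ⊆ T whose density d(S) = lim_{n→∞} |S ∩ Δ_n|/|Δ_n| exists and is positive. -/

import Mathlib

open Filter

/-- A (rooted, locally finite) tree realized as a set of finite words over the
`d` generators: it contains the root (the empty word) and is closed under prefixes. -/
def IsTree {d : ℕ} (T : Set (List (Fin d))) : Prop :=
  ([] : List (Fin d)) ∈ T ∧ ∀ w ∈ T, ∀ u : List (Fin d), u <+: w → u ∈ T

/-- `T_n`: the set of vertices of `T` at distance `n` from the root. -/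
def level {d : ℕ} (T : Set (List (Fin d))) (n : ℕ) : Set (List (Fin d)) :=
  {w ∈ T | w.length = n}

/-- `Δ_n = ∪_{i=0}^n T_i`: the set of vertices of `T` at distance at most `n`. -/
def ball {d : ℕ} (T : Set (List (Fin d))) (n : ℕ) : Set (List (Fin d)) :=
  {w ∈ T | w.length ≤ n}

/-- The statement that the expanding number `γ_T = lim_n |T_{n+1}|/|T_n|` exists
and equals `γ`. -/
def HasExpandingNumber {d : ℕ} (T : Set (List (Fin d))) (γ : ℝ) : Prop :=
  Tendsto (fun n : ℕ => ((level T (n + 1)).ncard : ℝ) / ((level T n).ncard : ℝ)) atTop (nhds γ)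

/-- `|P(Δ_n, 𝒯)|`: the number of restrictions of labeled trees of `𝒯` to `Δ_n`. -/
noncomputable def ballBlockCount {d : ℕ} {A : Type*} (T : Set (List (Fin d)))
    (𝒯 : Set (List (Fin d) → A)) (n : ℕ) : ℕ :=
  Set.ncard ((fun t (w : ball T n) => t (w : List (Fin d))) '' 𝒯)

/-- The entropy of a tree-shift, `h(𝒯) = limsup_n log |P(Δ_n,𝒯)| / |Δ_n|`. -/
noncomputable def treeEntropy {d : ℕ} {A : Type*} (T : Set (List (Fin d)))
    (𝒯 : Set (List (Fin d) → A)) : ℝ :=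
  limsup (fun n : ℕ => Real.log (ballBlockCount T 𝒯 n) / ((ball T n).ncard : ℝ)) atTop

/-- `S` is an independence set for `𝒯`: every assignment of symbols on `S`
extends to an element of `𝒯`. -/
def IsIndepSet {I A : Type*} (𝒯 : Set (I → A)) (S : Set I) : Prop :=
  ∀ u : I → A, ∃ t ∈ 𝒯, ∀ w ∈ S, t w = u w

/-- `𝒯` is a tree-shift on `T`: the set of labelings of `T` avoiding every pattern
from some set `F` of forbidden finite patterns (a pattern is a finitely supported
partial labeling; it appears in `t` at a vertex `g ∈ T` if every cell of the pattern,
translated to sit below `g`, lies in `T` and carries the prescribed label). -/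
def IsTreeShift {d : ℕ} {A : Type*} (T : Set (List (Fin d)))
    (𝒯 : Set (List (Fin d) → A)) : Prop :=
  ∃ F : Set (List (Fin d) → Option A),
    (∀ p ∈ F, {w | p w ≠ none}.Finite) ∧
    𝒯 = {t | ∀ p ∈ F, ∀ g ∈ T,
          ¬ ∀ w : List (Fin d), ∀ a : A, p w = some a → g ++ w ∈ T ∧ t (g ++ w) = a}

/-- The density `d(S) = lim_n |S ∩ Δ_n|/|Δ_n|` of `S ⊆ T` exists and is positive. -/
def HasPosDensity {d : ℕ} (T : Set (List (Fin d))) (S : Set (List (Fin d))) : Prop :=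
  ∃ δ : ℝ, 0 < δ ∧
    Tendsto (fun n : ℕ => ((S ∩ ball T n).ncard : ℝ) / ((ball T n).ncard : ℝ)) atTop (nhds δ)

namespace Statement10

variable {d : ℕ} {T : Set (List (Fin d))} {γ : ℝ}

/-- The forbidden pattern attached to a pair of words: `some true` at `u` and `v`. -/
def pat (u v : List (Fin d)) : List (Fin d) → Option Bool :=
  fun w => if w = u ∨ w = v then some true else none

/-- Forbidden patterns: two `true`s at words of different lengths. -/
def FF (d : ℕ) : Set (List (Fin d) → Option Bool) :=
  {p | ∃ u v : List (Fin d), u.length ≠ v.length ∧ p = pat u v}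

/-- The tree-shift: labelings avoiding all patterns of `FF`. -/
def TS (T : Set (List (Fin d))) : Set (List (Fin d) → Bool) :=
  {t | ∀ p ∈ FF d, ∀ g ∈ T,
        ¬ ∀ w : List (Fin d), ∀ a : Bool, p w = some a → g ++ w ∈ T ∧ t (g ++ w) = a}

lemma isTreeShift (T : Set (List (Fin d))) : IsTreeShift T (TS T) := by
  refine ⟨FF d, ?_, rfl⟩
  rintro p ⟨u, v, -, rfl⟩
  refine Set.Finite.subset ((Set.finite_singleton v).insert u) ?_
  intro w hw
  simp only [pat, ne_eq, Set.mem_setOf_eq] at hw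
  by_contra h
  simp only [Set.mem_insert_iff, Set.mem_singleton_iff] at h
  push_neg at h
  exact hw (by rw [if_neg (by tauto)])

lemma pat_self_left (u v : List (Fin d)) : pat u v u = some true := by simp [pat]

lemma pat_self_right (u v : List (Fin d)) : pat u v v = some true := by simp [pat]

lemma mem_TS {T : Set (List (Fin d))} (hroot : ([] : List (Fin d)) ∈ T)
    {t : List (Fin d) → Bool} :
    t ∈ TS T ↔ ∀ x ∈ T, ∀ y ∈ T, x.length ≠ y.length → ¬(t x = true ∧ t y = true) := by
  constructor
  · intro ht x hx y hy hxy ⟨htx, hty⟩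
    refine ht (pat x y) ⟨x, y, hxy, rfl⟩ [] hroot ?_
    intro w a hw
    simp only [pat] at hw
    by_cases hc : w = x ∨ w = y
    · rw [if_pos hc] at hw
      obtain rfl : a = true := by simpa using hw.symm
      rcases hc with rfl | rfl
      · exact ⟨by simpa using hx, by simpa using htx⟩
      · exact ⟨by simpa using hy, by simpa using hty⟩
    · rw [if_neg hc] at hw; exact absurd hw (by simp)
  · rintro h p ⟨u, v, huv, rfl⟩ g hg hall
    have h1 := hall u true (pat_self_left u v)
    have h2 := hall v true (pat_self_right u v)
    exact h (g ++ u) h1.1 (g ++ v) h2.1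
      (by simp only [List.length_append]; omega) ⟨h1.2, h2.2⟩

lemma level_finite (T : Set (List (Fin d))) (n : ℕ) : (level T n).Finite :=
  (List.finite_length_eq (Fin d) n).subset fun _ hw => hw.2

lemma ball_finite (T : Set (List (Fin d))) (n : ℕ) : (ball T n).Finite :=
  (List.finite_length_le (Fin d) n).subset fun _ hw => hw.2

lemma level_nonempty (hT : IsTree T) (hγ : HasExpandingNumber T γ) (hγ1 : 1 < γ)
    (n : ℕ) : (level T n).Nonempty := by
  by_contra hne
  -- all levels from `n` on are empty
  have hempty : ∀ m, n ≤ m → level T m = ∅ := by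
    intro m hm
    ext w
    simp only [Set.mem_empty_iff_false, iff_false]
    rintro ⟨hwT, hwl⟩
    have hpre : w.take n ∈ T := hT.2 w hwT _ (List.take_prefix n w)
    have : w.take n ∈ level T n := ⟨hpre, by simp [hwl]; omega⟩
    exact absurd ⟨_, this⟩ hne
  have h0 : Tendsto (fun n : ℕ => ((level T (n + 1)).ncard : ℝ) / ((level T n).ncard : ℝ))
      atTop (nhds 0) := by
    refine Tendsto.congr' ?_ tendsto_const_nhds
    filter_upwards [eventually_ge_atTop n] with m hm
    rw [hempty (m + 1) (by omega), hempty m hm]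
    simp
  have : γ = 0 := tendsto_nhds_unique hγ h0
  linarith

lemma one_le_level_ncard (hT : IsTree T) (hγ : HasExpandingNumber T γ) (hγ1 : 1 < γ)
    (n : ℕ) : 1 ≤ (level T n).ncard := by
  rw [Nat.one_le_iff_ne_zero, ← Nat.pos_iff_ne_zero,
    Set.ncard_pos (level_finite T n)]
  exact level_nonempty hT hγ hγ1 n

lemma ball_zero (T : Set (List (Fin d))) : ball T 0 = level T 0 := by
  ext w; simp [ball, level, Nat.le_zero]

lemma ball_succ (T : Set (List (Fin d))) (n : ℕ) :
    ball T (n + 1) = ball T n ∪ level T (n + 1) := by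
  ext w
  simp only [ball, level, Set.mem_setOf_eq, Set.mem_union]
  constructor
  · rintro ⟨h1, h2⟩
    rcases Nat.lt_or_ge w.length (n+1) with h | h
    · exact Or.inl ⟨h1, by omega⟩
    · exact Or.inr ⟨h1, by omega⟩
  · rintro (⟨h1, h2⟩ | ⟨h1, h2⟩) <;> exact ⟨h1, by omega⟩

lemma ncard_ball (T : Set (List (Fin d))) (n : ℕ) :
    (ball T n).ncard = ∑ k ∈ Finset.range (n + 1), (level T k).ncard := by
  induction n with
  | zero => simp [ball_zero]
  | succ n ih =>
    rw [Finset.sum_range_succ, ← ih, ball_succ,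
      Set.ncard_union_eq ?_ (ball_finite T n) (level_finite T (n+1))]
    rw [Set.disjoint_left]
    rintro w ⟨-, hw⟩ ⟨-, hw'⟩
    omega

lemma ncard_ball_ge (T : Set (List (Fin d))) (hT : IsTree T)
    (hγ : HasExpandingNumber T γ) (hγ1 : 1 < γ) (n : ℕ) :
    n + 1 ≤ (ball T n).ncard := by
  rw [ncard_ball]
  calc n + 1 = ∑ _k ∈ Finset.range (n+1), 1 := by simp
  _ ≤ _ := Finset.sum_le_sum fun k _ => one_le_level_ncard hT hγ hγ1 k

lemma no_indep (hT : IsTree T) (hγ : HasExpandingNumber T γ) (hγ1 : 1 < γ) :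
    ¬ ∃ S : Set (List (Fin d)), S ⊆ T ∧ IsIndepSet (TS T) S ∧ HasPosDensity T S := by
  rintro ⟨S, hST, hind, δ, hδ, hlim⟩
  obtain ⟨t, htT, hts⟩ := hind fun _ => true
  have hSlen : ∀ x ∈ S, ∀ y ∈ S, x.length = y.length := by
    intro x hx y hy
    by_contra hne
    exact (mem_TS hT.1).1 htT x (hST hx) y (hST hy) hne ⟨hts x hx, hts y hy⟩
  have hSfin : S.Finite := by
    rcases S.eq_empty_or_nonempty with rfl | ⟨x0, hx0⟩
    · exact Set.finite_empty
    · exact (List.finite_length_eq (Fin d) x0.length).subset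
        fun y hy => (hSlen y hy x0 hx0)
  have h0 : Tendsto (fun n : ℕ => ((S ∩ ball T n).ncard : ℝ) / ((ball T n).ncard : ℝ))
      atTop (nhds 0) := by
    have hub : ∀ n : ℕ, ((S ∩ ball T n).ncard : ℝ) / ((ball T n).ncard : ℝ)
        ≤ (S.ncard : ℝ) / ((n : ℝ) + 1) := by
      intro n
      have hb : ((n : ℝ) + 1) ≤ ((ball T n).ncard : ℝ) := by
        exact_mod_cast ncard_ball_ge T hT hγ hγ1 n
      have hnum : ((S ∩ ball T n).ncard : ℝ) ≤ (S.ncard : ℝ) := by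
        exact_mod_cast Set.ncard_le_ncard Set.inter_subset_left hSfin
      exact div_le_div₀ (by positivity) hnum (by positivity) hb
    have hconst : Tendsto (fun n : ℕ => (S.ncard : ℝ) / ((n : ℝ) + 1)) atTop (nhds 0) :=
      Tendsto.div_atTop tendsto_const_nhds
        (tendsto_atTop_add_const_right _ 1 tendsto_natCast_atTop_atTop)
    exact squeeze_zero (fun n => by positivity) hub hconst
  exact hδ.ne' (tendsto_nhds_unique hlim h0)

lemma count_upper (T : Set (List (Fin d))) (n : ℕ) :
    ballBlockCount T (TS T) n ≤ 2 ^ (ball T n).ncard := by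
  have hfin : Finite ↥(ball T n) := (ball_finite T n).to_subtype
  unfold ballBlockCount
  calc Set.ncard _ ≤ Set.ncard (Set.univ : Set (↥(ball T n) → Bool)) :=
        Set.ncard_le_ncard (Set.subset_univ _) Set.finite_univ
  _ = Nat.card (↥(ball T n) → Bool) := Set.ncard_univ _
  _ = 2 ^ (ball T n).ncard := by
      rw [Nat.card_fun, Nat.card_coe_set_eq]
      simp

lemma count_lower (hroot : ([] : List (Fin d)) ∈ T) (n : ℕ) :
    2 ^ (level T n).ncard ≤ ballBlockCount T (TS T) n := by
  letI : ∀ w : List (Fin d), Decidable (w ∈ level T n) := fun w => Classical.dec _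
  have hfinb : Finite ↥(ball T n) := (ball_finite T n).to_subtype
  have hfinl : Finite ↥(level T n) := (level_finite T n).to_subtype
  set I := ((fun t (w : ball T n) => t (w : List (Fin d))) '' TS T) with hI
  have hIfin : I.Finite := Set.toFinite _
  have hIfin' : Finite ↥I := hIfin.to_subtype
  -- extension of a labeling of the level by `false`
  set ext : (↥(level T n) → Bool) → (List (Fin d) → Bool) :=
    fun u w => if h : w ∈ level T n then u ⟨w, h⟩ else false with hext
  have hmem : ∀ u, ext u ∈ TS T := by
    intro u
    rw [mem_TS hroot]
    rintro x hx y hy hxy ⟨htx, hty⟩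
    simp only [hext] at htx hty
    by_cases h1 : x ∈ level T n
    · by_cases h2 : y ∈ level T n
      · exact hxy (h1.2.trans h2.2.symm)
      · rw [dif_neg h2] at hty; exact absurd hty (by simp)
    · rw [dif_neg h1] at htx; exact absurd htx (by simp)
  set Φ : (↥(level T n) → Bool) → ↥I :=
    fun u => ⟨fun w => ext u (w : List (Fin d)), ⟨ext u, hmem u, rfl⟩⟩ with hΦ
  have hΦinj : Function.Injective Φ := by
    intro u v huv
    funext x
    have hxb : (x : List (Fin d)) ∈ ball T n := ⟨x.2.1, le_of_eq x.2.2⟩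
    have := congrFun (congrArg Subtype.val huv) ⟨(x : List (Fin d)), hxb⟩
    simpa only [hΦ, hext, dif_pos x.2, Subtype.coe_eta] using this
  calc 2 ^ (level T n).ncard = Nat.card (↥(level T n) → Bool) := by
        rw [Nat.card_fun, Nat.card_coe_set_eq]; simp
  _ ≤ Nat.card ↥I := Nat.card_le_card_of_injective Φ hΦinj
  _ = I.ncard := Nat.card_coe_set_eq I

lemma entropy_pos (hT : IsTree T) (hγ : HasExpandingNumber T γ) (hγ1 : 1 < γ) :
    0 < treeEntropy T (TS T) := by
  show 0 < limsup (fun n : ℕ =>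
    Real.log (ballBlockCount T (TS T) n) / ((ball T n).ncard : ℝ)) atTop
  set l : ℕ → ℝ := fun n => ((level T n).ncard : ℝ) with hldef
  set b : ℕ → ℝ := fun n => ((ball T n).ncard : ℝ) with hbdef
  set f : ℕ → ℝ := fun n => Real.log (ballBlockCount T (TS T) n) / b n with hfdef
  have hl1 : ∀ n, 1 ≤ l n := fun n => by
    show (1 : ℝ) ≤ ((level T n).ncard : ℝ)
    exact_mod_cast one_le_level_ncard hT hγ hγ1 n
  have hb0 : ∀ n, 0 < b n := fun n => by
    show (0 : ℝ) < ((ball T n).ncard : ℝ)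
    have h := ncard_ball_ge T hT hγ hγ1 n
    have h' : 0 < (ball T n).ncard := by omega
    exact_mod_cast h'
  have hcnt1 : ∀ n, (1 : ℕ) ≤ ballBlockCount T (TS T) n := fun n =>
    le_trans (Nat.one_le_two_pow) (count_lower hT.1 n)
  -- upper bound : f n ≤ log 2
  have hupper : ∀ n, f n ≤ Real.log 2 := by
    intro n
    rw [hfdef, div_le_iff₀ (hb0 n)]
    have h1 : (ballBlockCount T (TS T) n : ℝ) ≤ (2 : ℝ) ^ (ball T n).ncard := by
      exact_mod_cast count_upper T n
    calc Real.log (ballBlockCount T (TS T) n) ≤ Real.log ((2:ℝ) ^ (ball T n).ncard) :=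
          Real.log_le_log (by exact_mod_cast hcnt1 n) h1
    _ = ((ball T n).ncard : ℝ) * Real.log 2 := by rw [Real.log_pow]
    _ = Real.log 2 * b n := by rw [hbdef, mul_comm]
  -- growth of levels
  set ρ : ℝ := (1 + γ) / 2 with hρdef
  have hρ1 : 1 < ρ := by rw [hρdef]; linarith
  have hργ : ρ < γ := by rw [hρdef]; linarith
  obtain ⟨N, hN⟩ : ∃ N, ∀ n, N ≤ n → ρ * l n ≤ l (n + 1) := by
    have hev : ∀ᶠ n in atTop, ρ < l (n + 1) / l n := hγ.eventually (eventually_gt_nhds hργ)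
    obtain ⟨N, hN⟩ := hev.exists_forall_of_atTop
    exact ⟨N, fun n hn => le_of_lt ((lt_div_iff₀ (by linarith [hl1 n])).1 (hN n hn))⟩
  have hgrow : ∀ m, ρ ^ m ≤ l (N + m) := by
    intro m
    induction m with
    | zero => simpa using hl1 N
    | succ m ih =>
      calc ρ ^ (m + 1) = ρ * ρ ^ m := by ring
      _ ≤ ρ * l (N + m) := by
          exact mul_le_mul_of_nonneg_left ih (by linarith)
      _ ≤ l (N + m + 1) := hN _ (by omega)
  set K : ℝ := ρ / (ρ - 1) with hKdef
  have hK1 : 1 ≤ K := by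
    rw [hKdef, le_div_iff₀ (by linarith)]; linarith
  have hKρ : K * (ρ - 1) = ρ := by
    rw [hKdef, div_mul_cancel₀ _ (by linarith : ρ - 1 ≠ 0)]
  set C : ℝ := ∑ k ∈ Finset.range N, l k with hCdef
  have hbsum : ∀ n, b n = ∑ k ∈ Finset.range (n + 1), l k := by
    intro n
    rw [hbdef]
    simp only [ncard_ball]
    push_cast
    rfl
  have hsum : ∀ m, b (N + m) ≤ C + K * l (N + m) := by
    intro m
    induction m with
    | zero =>
      simp only [Nat.add_zero]
      rw [hbsum, Finset.sum_range_succ, ← hCdef]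
      have : l N ≤ K * l N := le_mul_of_one_le_left (by linarith [hl1 N]) hK1
      linarith
    | succ m ih =>
      have hstep : b (N + (m + 1)) = b (N + m) + l (N + m + 1) := by
        rw [hbsum, hbsum, ← Nat.add_assoc, Finset.sum_range_succ]
      have hr : ρ * l (N + m) ≤ l (N + m + 1) := hN _ (by omega)
      have hK0 : (0:ℝ) ≤ K - 1 := by linarith
      have h4 : (K - 1) * (ρ * l (N + m)) ≤ (K - 1) * l (N + m + 1) :=
        mul_le_mul_of_nonneg_left hr hK0
      have h5 : (K - 1) * (ρ * l (N + m)) = K * l (N + m) := by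
        have h6 : (K - 1) * ρ = K := by nlinarith [hKρ]
        calc (K - 1) * (ρ * l (N + m)) = ((K - 1) * ρ) * l (N + m) := by ring
        _ = K * l (N + m) := by rw [h6]
      have key : K * l (N + m) + l (N + m + 1) ≤ K * l (N + m + 1) := by
        linarith
      rw [hstep, show N + (m + 1) = N + m + 1 from rfl]
      linarith
  -- eventually C ≤ l n, hence b n ≤ (1 + K) * l n
  obtain ⟨M, hM⟩ : ∃ M, ∀ m, M ≤ m → C ≤ ρ ^ m :=
    ((tendsto_pow_atTop_atTop_of_one_lt hρ1).eventually_ge_atTop C).exists_forall_of_atTop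
  have hball_le : ∀ n, N + M ≤ n → b n ≤ (1 + K) * l n := by
    intro n hn
    obtain ⟨m, rfl⟩ : ∃ m, n = N + m := ⟨n - N, by omega⟩
    have hC : C ≤ l (N + m) :=
      le_trans (le_trans (hM m (by omega)) (pow_le_pow_right₀ (le_of_lt hρ1) (by omega)))
        (hgrow m)
    calc b (N + m) ≤ C + K * l (N + m) := hsum m
    _ ≤ (1 + K) * l (N + m) := by linarith
  -- eventual lower bound on f
  set c : ℝ := Real.log 2 / (1 + K) with hcdef
  have hc0 : 0 < c := div_pos (Real.log_pos (by norm_num)) (by linarith)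
  have hlow : ∀ n, N + M ≤ n → c ≤ f n := by
    intro n hn
    have h1 : l n * Real.log 2 ≤ Real.log (ballBlockCount T (TS T) n) := by
      have h2 : ((2:ℝ) ^ (level T n).ncard) ≤ (ballBlockCount T (TS T) n : ℝ) := by
        exact_mod_cast count_lower hT.1 n
      calc l n * Real.log 2 = Real.log ((2:ℝ) ^ (level T n).ncard) := by
            rw [Real.log_pow]
      _ ≤ _ := Real.log_le_log (by positivity) h2
    have h3 : c ≤ l n * Real.log 2 / b n := by
      rw [hcdef]
      calc Real.log 2 / (1 + K) = l n * Real.log 2 / ((1 + K) * l n) := by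
            rw [mul_comm (l n) (Real.log 2), mul_div_mul_right _ _
              (by linarith [hl1 n] : l n ≠ 0)]
      _ ≤ l n * Real.log 2 / b n := by
            apply div_le_div_of_nonneg_left _ (hb0 n) (hball_le n hn)
            positivity
    calc c ≤ l n * Real.log 2 / b n := h3
    _ ≤ f n := (div_le_div_iff_of_pos_right (hb0 n)).2 h1
  have hfreq : ∃ᶠ n in atTop, c ≤ f n :=
    ((eventually_ge_atTop (N + M)).mono fun n hn => hlow n hn).frequently
  have hbd : IsBoundedUnder (· ≤ ·) atTop f := isBoundedUnder_of ⟨Real.log 2, hupper⟩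
  exact lt_of_lt_of_le hc0 (le_limsup_of_frequently_le hfreq hbd)

end Statement10

/-- On any expandable tree (`γ_T > 1`) there is a tree-shift
`𝒯 ⊆ {0,1}^T` with positive entropy which has no independence set `S ⊆ T`
of positive density. -/
theorem exists_treeShift_pos_entropy_without_indep_posDensity
    (d : ℕ) (T : Set (List (Fin d))) (hT : IsTree T)
    (γ : ℝ) (hγ : HasExpandingNumber T γ) (hγ1 : 1 < γ) :
    ∃ 𝒯 : Set (List (Fin d) → Bool), IsTreeShift T 𝒯 ∧ 0 < treeEntropy T 𝒯 ∧
      ¬ ∃ S : Set (List (Fin d)), S ⊆ T ∧ IsIndepSet 𝒯 S ∧ HasPosDensity T S := by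
  exact ⟨Statement10.TS T, Statement10.isTreeShift T,
    Statement10.entropy_pos hT hγ hγ1, Statement10.no_indep hT hγ hγ1⟩
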